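/- Let (Eᵢ)_{i∈I} and (Fᵢ)_{i∈I} be families of locally convex real vector spaces with locally convex direct sums E = ⊕ᵢEᵢ and F = ⊕ᵢFᵢ, let Z be a finite-dimensional real vector space, V ⊆ Z open, and for each i let fᵢ : V × Eᵢ → Fᵢ be continuous and linear in the second argument. Then the map f : V × E → F, (x, (vᵢ)ᵢ) ↦ (fᵢ(x, vᵢ))ᵢ, is continuous. -/

import Mathlib

open Filter Topology DirectSum

/-- Continuity of sums of parameter-dependent linear maps on locally convex direct
sums.  The locally convex direct sum topologies on `⨁ᵢ Eᵢ` and `⨁ᵢ Fᵢ` are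
axiomatized: they are locally convex vector topologies making the inclusions
continuous, and on the domain side the absolutely convex hulls of unions `⋃ᵢ Qᵢ` of
`0`-neighbourhoods form a base of `0`-neighbourhoods.  If `Z` is finite-dimensional,
`V ⊆ Z` is open and each `fᵢ : V × Eᵢ → Fᵢ` is continuous and linear in its second
argument, then `f : V × ⨁ᵢEᵢ → ⨁ᵢFᵢ`, `(x,(vᵢ)ᵢ) ↦ (fᵢ(x,vᵢ))ᵢ`, is continuous. -/
theorem continuousOn_directSum_map {I : Type*} [DecidableEq I]
    {E F : I → Type*}
    [∀ i, AddCommGroup (E i)] [∀ i, Module ℝ (E i)] [∀ i, TopologicalSpace (E i)]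
    [∀ i, IsTopologicalAddGroup (E i)] [∀ i, ContinuousSMul ℝ (E i)]
    [∀ i, LocallyConvexSpace ℝ (E i)]
    [∀ i, AddCommGroup (F i)] [∀ i, Module ℝ (F i)] [∀ i, TopologicalSpace (F i)]
    [∀ i, IsTopologicalAddGroup (F i)] [∀ i, ContinuousSMul ℝ (F i)]
    [∀ i, LocallyConvexSpace ℝ (F i)]
    {Z : Type*} [AddCommGroup Z] [Module ℝ Z] [TopologicalSpace Z]
    [IsTopologicalAddGroup Z] [ContinuousSMul ℝ Z] [T2Space Z] [FiniteDimensional ℝ Z]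
    [TopologicalSpace (⨁ i, E i)] [IsTopologicalAddGroup (⨁ i, E i)]
    [ContinuousSMul ℝ (⨁ i, E i)] [LocallyConvexSpace ℝ (⨁ i, E i)]
    [TopologicalSpace (⨁ i, F i)] [IsTopologicalAddGroup (⨁ i, F i)]
    [ContinuousSMul ℝ (⨁ i, F i)] [LocallyConvexSpace ℝ (⨁ i, F i)]
    (hinclE : ∀ i, Continuous fun v : E i => (DirectSum.of E i v : ⨁ i, E i))
    (hinclF : ∀ i, Continuous fun w : F i => (DirectSum.of F i w : ⨁ i, F i))
    (hhull : ∀ Q : ∀ i, Set (E i), (∀ i, Q i ∈ 𝓝 (0 : E i)) →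
      convexHull ℝ (balancedHull ℝ
        (⋃ i, (fun v : E i => (DirectSum.of E i v : ⨁ i, E i)) '' Q i)) ∈
          𝓝 (0 : ⨁ i, E i))
    (hbase : ∀ S ∈ 𝓝 (0 : ⨁ i, E i), ∃ Q : ∀ i, Set (E i),
      (∀ i, Q i ∈ 𝓝 (0 : E i)) ∧
      convexHull ℝ (balancedHull ℝ
        (⋃ i, (fun v : E i => (DirectSum.of E i v : ⨁ i, E i)) '' Q i)) ⊆ S)
    (V : Set Z) (hV : IsOpen V)
    (f : ∀ i, Z × E i → F i)
    (hfcont : ∀ i, ContinuousOn (f i) (V ×ˢ Set.univ))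
    (hflin : ∀ i, ∀ x ∈ V, IsLinearMap ℝ fun v : E i => f i (x, v))
    (g : Z × (⨁ i, E i) → ⨁ i, F i)
    (hg : ∀ (p : Z × (⨁ i, E i)) (i : I), g p i = f i (p.1, p.2 i)) :
    ContinuousOn g (V ×ˢ Set.univ) := by

  classical
  -- `Z` is locally compact
  have hZ : LocallyCompactSpace Z := by
    let e : Z ≃L[ℝ] (Fin (Module.finrank ℝ Z) → ℝ) :=
      ContinuousLinearEquiv.ofFinrankEq (by simp)
    exact e.toHomeomorph.locallyCompactSpace_iff.mpr inferInstance
  -- linearity of `g (x, ·)` for `x ∈ V`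
  have hglin : ∀ x ∈ V, IsLinearMap ℝ fun v : ⨁ i, E i => g (x, v) := by
    intro x hx
    constructor
    · intro v w
      refine DFinsupp.ext fun i => ?_
      have h1 : g (x, v + w) i = f i (x, (v + w) i) := hg (x, v + w) i
      have h2 : g (x, v) i = f i (x, v i) := hg (x, v) i
      have h3 : g (x, w) i = f i (x, w i) := hg (x, w) i
      rw [DFinsupp.add_apply, h1, h2, h3, DirectSum.add_apply,
        (hflin i x hx).map_add]
    · intro c v
      refine DFinsupp.ext fun i => ?_
      have h1 : g (x, c • v) i = f i (x, (c • v) i) := hg (x, c • v) i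
      have h2 : g (x, v) i = f i (x, v i) := hg (x, v) i
      rw [DFinsupp.smul_apply, h1, h2, DirectSum.smul_apply,
        (hflin i x hx).map_smul]
  -- action on the canonical inclusions
  have hgof : ∀ x ∈ V, ∀ (i : I) (q : E i),
      g (x, DirectSum.of E i q) = DirectSum.of F i (f i (x, q)) := by
    intro x hx i q
    refine DFinsupp.ext fun j => ?_
    have h1 : g (x, DirectSum.of E i q) j = f j (x, (DirectSum.of E i q) j) :=
      hg (x, DirectSum.of E i q) j
    by_cases h : i = j
    · subst h
      rw [h1, DirectSum.of_eq_same, DirectSum.of_eq_same]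
    · rw [h1, DirectSum.of_eq_of_ne _ _ _ (Ne.symm h), DirectSum.of_eq_of_ne _ _ _ (Ne.symm h),
        (hflin j x hx).map_zero]
  -- `g (x, v)` as a finite sum
  have hgsum : ∀ x ∈ V, ∀ v : ⨁ i, E i,
      g (x, v) = ∑ i ∈ DFinsupp.support v, DirectSum.of F i (f i (x, v i)) := by
    intro x hx v
    have hmap : ∀ (s : Finset I) (w : I → ⨁ i, E i),
        g (x, ∑ i ∈ s, w i) = ∑ i ∈ s, g (x, w i) := by
      intro s w
      induction s using Finset.cons_induction with
      | empty => simpa using (hglin x hx).map_zero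
      | cons a s ha ih => rw [Finset.sum_cons, Finset.sum_cons,
          (hglin x hx).map_add, ih]
    calc g (x, v) = g (x, ∑ i ∈ DFinsupp.support v, DirectSum.of E i (v i)) := by
          rw [DirectSum.sum_support_of]
      _ = ∑ i ∈ DFinsupp.support v, g (x, DirectSum.of E i (v i)) := hmap _ _
      _ = ∑ i ∈ DFinsupp.support v, DirectSum.of F i (f i (x, v i)) :=
          Finset.sum_congr rfl fun i _ => hgof x hx i (v i)
  rintro ⟨x₀, v₀⟩ ⟨hx₀, -⟩
  have hdiff : Tendsto (fun q : Z × (⨁ i, E i) => g q - g (x₀, v₀))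
      (𝓝[V ×ˢ Set.univ] (x₀, v₀)) (𝓝 0) := by
    rw [(nhds_hasBasis_absConvex ℝ (⨁ i, F i)).tendsto_right_iff]
    rintro W ⟨hWnhds, hWbal, hWconv⟩
    obtain ⟨W', hW'nhds, hW'W⟩ := exists_nhds_zero_half hWnhds
    obtain ⟨W₁, ⟨hW₁nhds, hW₁bal, hW₁conv⟩, hW₁W'⟩ :=
      ((nhds_hasBasis_absConvex ℝ (⨁ i, F i)).mem_iff.mp hW'nhds)
    -- a compact neighbourhood of `x₀` inside `V`
    obtain ⟨K, hKnhds, hKV, hK⟩ := local_compact_nhds (hV.mem_nhds hx₀)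
    -- the uniform neighbourhoods `Q i`
    have hQex : ∀ i : I, ∃ Qi : Set (E i), Qi ∈ 𝓝 (0 : E i) ∧
        ∀ x ∈ K, ∀ q ∈ Qi, (DirectSum.of F i (f i (x, q)) : ⨁ i, F i) ∈ W₁ := by
      intro i
      have hTnhds : (fun w : F i => (DirectSum.of F i w : ⨁ i, F i)) ⁻¹' W₁
          ∈ 𝓝 (0 : F i) := by
        refine (hinclF i).continuousAt.preimage_mem_nhds ?_
        rwa [map_zero (DirectSum.of F i)]
      set T : Set (F i) :=
        interior ((fun w : F i => (DirectSum.of F i w : ⨁ i, F i)) ⁻¹' W₁) with hT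
      have hTopen : IsOpen T := isOpen_interior
      have hT0 : (0 : F i) ∈ T := mem_interior_iff_mem_nhds.mpr hTnhds
      have hnopen : IsOpen ((V ×ˢ Set.univ) ∩ f i ⁻¹' T) :=
        (hfcont i).isOpen_inter_preimage (hV.prod isOpen_univ) hTopen
      have hnsub : K ×ˢ ({0} : Set (E i)) ⊆ (V ×ˢ Set.univ) ∩ f i ⁻¹' T := by
        rintro ⟨x, q⟩ ⟨hxK, hq0⟩
        have hq0' : q = 0 := hq0
        have hxV : x ∈ V := hKV hxK
        refine ⟨⟨hxV, Set.mem_univ _⟩, ?_⟩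
        show f i (x, q) ∈ T
        rw [hq0', (hflin i x hxV).map_zero]
        exact hT0
      obtain ⟨u, w, hu, hw, hKu, h0w, huw⟩ :=
        generalized_tube_lemma hK isCompact_singleton hnopen hnsub
      refine ⟨w, hw.mem_nhds (h0w rfl), fun x hxK q hqw => ?_⟩
      have hmem := huw (Set.mk_mem_prod (hKu hxK) hqw)
      have hfT : f i (x, q) ∈ T := hmem.2
      have : f i (x, q) ∈
          (fun w : F i => (DirectSum.of F i w : ⨁ i, F i)) ⁻¹' W₁ :=
        interior_subset hfT
      exact this
    choose Q hQ1 hQ2 using hQex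
    set S : Set (⨁ i, E i) := convexHull ℝ (balancedHull ℝ
      (⋃ i, (fun v : E i => (DirectSum.of E i v : ⨁ i, E i)) '' Q i)) with hSdef
    have hSnhds : S ∈ 𝓝 (0 : ⨁ i, E i) := hhull Q hQ1
    -- the key uniform estimate
    have key : ∀ x ∈ K, ∀ v ∈ S, g (x, v) ∈ W₁ := by
      intro x hxK
      have hxV : x ∈ V := hKV hxK
      set A : Set (⨁ i, E i) := (fun v => g (x, v)) ⁻¹' W₁ with hA
      have hAconv : Convex ℝ A := hW₁conv.is_linear_preimage (hglin x hxV)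
      have hAbal : Balanced ℝ A := by
        intro a ha
        rintro _ ⟨v, hv, rfl⟩
        show g (x, a • v) ∈ W₁
        rw [(hglin x hxV).map_smul]
        exact hW₁bal.smul_mem ha hv
      have hsub : (⋃ i, (fun v : E i => (DirectSum.of E i v : ⨁ i, E i)) '' Q i)
          ⊆ A := by
        rintro _ ⟨_, ⟨i, rfl⟩, q, hq, rfl⟩
        show g (x, DirectSum.of E i q) ∈ W₁
        rw [hgof x hxV i q]
        exact hQ2 i x hxK q hq
      exact fun v hv =>
        convexHull_min (hAbal.balancedHull_subset_of_subset hsub) hAconv hv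
    -- term 2 : continuity of `x ↦ g (x, v₀)`
    have hcont2 : ContinuousWithinAt (fun x : Z => g (x, v₀)) V x₀ := by
      have hsumcont : Tendsto (fun x : Z =>
          ∑ i ∈ DFinsupp.support v₀,
            (DirectSum.of F i (f i (x, v₀ i)) : ⨁ i, F i)) (𝓝[V] x₀)
          (𝓝 (∑ i ∈ DFinsupp.support v₀,
            (DirectSum.of F i (f i (x₀, v₀ i)) : ⨁ i, F i))) := by
        refine tendsto_finset_sum _ fun i _ => ?_
        have h1 : ContinuousWithinAt (fun x : Z => f i (x, v₀ i)) V x₀ := by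
          refine ContinuousWithinAt.comp
            (hfcont i (x₀, v₀ i) ⟨hx₀, Set.mem_univ _⟩)
            ((continuous_id.prodMk continuous_const).continuousWithinAt)
            fun x hx => ⟨hx, Set.mem_univ _⟩
        exact (hinclF i).continuousAt.comp_continuousWithinAt h1
      have hsumcont' : ContinuousWithinAt (fun x : Z =>
          ∑ i ∈ DFinsupp.support v₀,
            (DirectSum.of F i (f i (x, v₀ i)) : ⨁ i, F i)) V x₀ := hsumcont
      exact hsumcont'.congr (fun x hx => hgsum x hx v₀) (hgsum x₀ hx₀ v₀)
    have hfst : Tendsto (fun q : Z × (⨁ i, E i) => q.1)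
        (𝓝[V ×ˢ Set.univ] (x₀, v₀)) (𝓝[V] x₀) := by
      rw [nhdsWithin_prod_eq]
      exact tendsto_fst
    have hterm2 : ∀ᶠ q in 𝓝[V ×ˢ Set.univ] (x₀, v₀),
        g (q.1, v₀) - g (x₀, v₀) ∈ W₁ := by
      have h0 : Tendsto (fun x : Z => g (x, v₀) - g (x₀, v₀)) (𝓝[V] x₀) (𝓝 0) := by
        have h1 : Tendsto (fun x : Z => g (x, v₀) - g (x₀, v₀)) (𝓝[V] x₀)
            (𝓝 (g (x₀, v₀) - g (x₀, v₀))) :=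
          hcont2.sub tendsto_const_nhds
        rwa [sub_self] at h1
      exact hfst.eventually (h0 hW₁nhds)
    -- term 1
    have hterm1 : ∀ᶠ q in 𝓝[V ×ˢ Set.univ] (x₀, v₀),
        q.1 ∈ K ∧ q.2 - v₀ ∈ S := by
      have hvmem : (fun v : ⨁ i, E i => v - v₀) ⁻¹' S ∈ 𝓝 v₀ := by
        have hc : Continuous fun v : ⨁ i, E i => v - v₀ :=
          continuous_id.sub continuous_const
        refine hc.continuousAt.preimage_mem_nhds ?_
        simpa using hSnhds
      have hmem : K ×ˢ ((fun v : ⨁ i, E i => v - v₀) ⁻¹' S) ∈ 𝓝 ((x₀, v₀) :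
          Z × (⨁ i, E i)) := prod_mem_nhds hKnhds hvmem
      filter_upwards [mem_nhdsWithin_of_mem_nhds hmem] with q hq
      exact ⟨hq.1, hq.2⟩
    filter_upwards [self_mem_nhdsWithin, hterm1, hterm2] with q hqmem hq1 hq2
    have hxV : q.1 ∈ V := hqmem.1
    have hsplit : g q = g (q.1, q.2 - v₀) + g (q.1, v₀) := by
      have h := (hglin q.1 hxV).map_add (q.2 - v₀) v₀
      rw [sub_add_cancel] at h
      rw [← h]
    have hmem1 : g (q.1, q.2 - v₀) ∈ W' := hW₁W' (key q.1 hq1.1 _ hq1.2)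
    have hmem2 : g (q.1, v₀) - g (x₀, v₀) ∈ W' := hW₁W' hq2
    have : g q - g (x₀, v₀) = g (q.1, q.2 - v₀) + (g (q.1, v₀) - g (x₀, v₀)) := by
      rw [hsplit]; abel
    rw [this]
    exact hW'W _ hmem1 _ hmem2
  have := hdiff.add (tendsto_const_nhds (x := g (x₀, v₀)))
  rw [zero_add] at this
  have heq : (fun q : Z × (⨁ i, E i) => g q - g (x₀, v₀) + g (x₀, v₀)) = g := by
    funext q; rw [sub_add_cancel]
  rw [heq] at this
  exact this
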